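/- Let n ≥ 1 and let u, z ∈ ℝ^n. Call M = {(i_1,j_1),…,(i_L,j_L)} a valid matching if all 2L indices are distinct elements of [n], L ≤ ⌊n/2⌋, and z_{i_ℓ} ≤ z_{j_ℓ} for each ℓ. Define S(u,z) = sup over valid matchings M of ( Σ_{ℓ=1}^L max{u_{i_ℓ} − u_{j_ℓ}, 0}^2 )^{1/2}, and define I(u,z) = inf over nondecreasing functions g: ℝ → ℝ of ( Σ_{i=1}^n (u_i − g(z_i))^2 )^{1/2}. Then I(u,z) ≤ S(u,z) ≤ √2 · I(u,z). -/

import Mathlib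

noncomputable section

open Finset

/-- `S(u,z)`: the supremum, over all valid matchings `M = {(i_ℓ, j_ℓ)}_{ℓ=1}^L`
(distinct indices, `L ≤ ⌊n/2⌋`, and `z_{i_ℓ} ≤ z_{j_ℓ}`), of
`(∑_ℓ max{u_{i_ℓ} − u_{j_ℓ}, 0}²)^{1/2}`. -/
def matchingScore (n : ℕ) (u z : Fin n → ℝ) : ℝ :=
  sSup {r : ℝ | ∃ (L : ℕ) (i j : Fin L → Fin n),
    Function.Injective (Sum.elim i j) ∧ L ≤ n / 2 ∧
    (∀ ℓ, z (i ℓ) ≤ z (j ℓ)) ∧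
    r = Real.sqrt (∑ ℓ, max (u (i ℓ) - u (j ℓ)) 0 ^ 2)}

/-- `I(u,z)`: the infimum over nondecreasing `g : ℝ → ℝ` of
`(∑_i (u_i − g(z_i))²)^{1/2}`. -/
def isotonicDist (n : ℕ) (u z : Fin n → ℝ) : ℝ :=
  sInf {r : ℝ | ∃ g : ℝ → ℝ, Monotone g ∧
    r = Real.sqrt (∑ i, (u i - g (z i)) ^ 2)}



open Finset

section Iso

variable {n : ℕ}

def Kset (z : Fin n → ℝ) : Set (Fin n → ℝ) := {w | ∀ i j, z i ≤ z j → w i ≤ w j}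

lemma Kset_closed (z : Fin n → ℝ) : IsClosed (Kset z) := by
  have h : Kset z = ⋂ (i) (j), {w : Fin n → ℝ | z i ≤ z j → w i ≤ w j} := by
    ext w
    simp only [Kset, Set.mem_setOf_eq, Set.mem_iInter]
  rw [h]
  refine isClosed_iInter fun i => isClosed_iInter fun j => ?_
  by_cases hz : z i ≤ z j
  · simp only [hz, forall_true_left]
    exact isClosed_le (continuous_apply i) (continuous_apply j)
  · have : {w : Fin n → ℝ | z i ≤ z j → w i ≤ w j} = Set.univ := by
      ext w; simp [hz]
    rw [this]; exact isClosed_univ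

lemma exists_iso_min (u z : Fin n → ℝ) :
    ∃ v ∈ Kset z, ∀ w ∈ Kset z,
      (∑ t, (u t - v t)^2) ≤ ∑ t, (u t - w t)^2 := by
  classical
  set f : (Fin n → ℝ) → ℝ := fun w => ∑ t, (u t - w t)^2 with hf
  have hfc : Continuous f := by
    apply continuous_finset_sum
    intro t _
    exact (continuous_const.sub (continuous_apply t)).pow 2
  have h0K : (fun _ => (0:ℝ)) ∈ Kset z := fun i j _ => le_refl 0
  set R := Real.sqrt (f (fun _ => 0)) with hR
  have hf0 : 0 ≤ f (fun _ => 0) := Finset.sum_nonneg fun t _ => sq_nonneg _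
  set C : Set (Fin n → ℝ) := Kset z ∩ {w | f w ≤ f (fun _ => 0)} with hC
  have hCcl : IsClosed C :=
    (Kset_closed z).inter (isClosed_le hfc continuous_const)
  have hCsub : C ⊆ Set.pi Set.univ (fun t => Set.Icc (u t - R) (u t + R)) := by
    intro w hw t _
    have h1 : (u t - w t)^2 ≤ f (fun _ => 0) := by
      refine le_trans ?_ hw.2
      exact Finset.single_le_sum (fun s _ => sq_nonneg (u s - w s)) (Finset.mem_univ t)
    have h2 : |u t - w t| ≤ R := by
      rw [← Real.sqrt_sq_eq_abs, hR]
      exact Real.sqrt_le_sqrt h1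
    rw [abs_le] at h2
    exact Set.mem_Icc.2 ⟨by linarith [h2.1], by linarith [h2.2]⟩
  have hCcp : IsCompact C := by
    refine IsCompact.of_isClosed_subset ?_ hCcl hCsub
    exact isCompact_univ_pi fun t => isCompact_Icc
  have hCne : C.Nonempty := ⟨fun _ => 0, h0K, le_refl (f fun _ => 0)⟩
  obtain ⟨v, hvC, hvmin⟩ := hCcp.exists_isMinOn hCne hfc.continuousOn
  refine ⟨v, hvC.1, fun w hw => ?_⟩
  by_cases hfw : f w ≤ f (fun _ => 0)
  · exact hvmin ⟨hw, hfw⟩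
  · push_neg at hfw
    exact le_of_lt (lt_of_le_of_lt (hvmin ⟨h0K, le_refl (f fun _ => 0)⟩) hfw)

variable (u z : Fin n → ℝ)

lemma perturb_core (v : Fin n → ℝ)
    (hmin : ∀ w ∈ Kset z, (∑ t, (u t - v t)^2) ≤ ∑ t, (u t - w t)^2)
    (P : Finset (Fin n)) (ε₀ : ℝ) (hε₀ : 0 < ε₀) (σ : ℝ) (hσ : σ = 1 ∨ σ = -1)
    (hmem : ∀ ε : ℝ, 0 < ε → ε ≤ ε₀ →
      (fun t => v t + σ * ε * (if t ∈ P then 1 else 0)) ∈ Kset z) :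
    σ * ∑ t ∈ P, (u t - v t) ≤ 0 := by
  set S := σ * ∑ t ∈ P, (u t - v t) with hS
  by_contra hc
  push_neg at hc
  set c : ℝ := (P.card : ℝ) with hcdef
  have hc0 : 0 ≤ c := by positivity
  set ε : ℝ := min ε₀ (S / (c + 1)) with hε_def
  have hε : 0 < ε := lt_min hε₀ (div_pos hc (by positivity))
  have hεle : ε ≤ ε₀ := min_le_left _ _
  have hkey := hmin _ (hmem ε hε hεle)
  have hσsq : σ^2 = 1 := by rcases hσ with h | h <;> rw [h] <;> norm_num
  have hexp : (∑ t, (u t - (v t + σ * ε * (if t ∈ P then 1 else 0)))^2)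
      = (∑ t, (u t - v t)^2) - 2*ε*S + ε^2 * c := by
    have hpt : ∀ t, (u t - (v t + σ * ε * (if t ∈ P then 1 else 0)))^2
        = (u t - v t)^2 + (-(2*ε)) * (if t ∈ P then σ * (u t - v t) else 0)
          + ε^2 * (if t ∈ P then 1 else 0) := by
      intro t
      by_cases h : t ∈ P
      · simp only [h, if_true]
        have h2 : σ * σ = 1 := by nlinarith [hσsq]
        nlinarith [h2]
      · simp only [h, if_false]; ring
    have e1 : (∑ t, (u t - (v t + σ * ε * (if t ∈ P then 1 else 0)))^2)
        = ∑ t, ((u t - v t)^2 + (-(2*ε)) * (if t ∈ P then σ * (u t - v t) else 0)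
            + ε^2 * (if t ∈ P then 1 else 0)) := Finset.sum_congr rfl fun t _ => hpt t
    rw [e1, Finset.sum_add_distrib, Finset.sum_add_distrib, ← Finset.mul_sum, ← Finset.mul_sum]
    have e2 : ∑ t, (if t ∈ P then σ * (u t - v t) else 0) = ∑ t ∈ P, σ * (u t - v t) := by
      rw [Finset.sum_ite_mem, Finset.univ_inter]
    have e3 : ∑ t : Fin n, (if t ∈ P then (1:ℝ) else 0) = c := by
      rw [Finset.sum_ite_mem, Finset.univ_inter, Finset.sum_const, nsmul_eq_mul, mul_one, hcdef]
    have e4 : ∑ t ∈ P, σ * (u t - v t) = S := by rw [hS, Finset.mul_sum]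
    rw [e2, e4, e3]
    ring
  rw [hexp] at hkey
  have h1 : ε ≤ S / (c + 1) := min_le_right _ _
  have h2 : ε * (c + 1) ≤ S := by
    rw [← le_div_iff₀ (by positivity : (0:ℝ) < c + 1)]
    exact h1
  have h3 : ε * (ε * (c+1)) ≤ ε * S := mul_le_mul_of_nonneg_left h2 hε.le
  nlinarith [hkey, h3, mul_pos hε hc, sq_nonneg ε, hε]

end Iso

section B
variable {n : ℕ}

def Bset (v : Fin n → ℝ) (c : ℝ) : Finset (Fin n) :=
  Finset.univ.filter (fun i => v i = c)

lemma Bset_mem (v : Fin n → ℝ) (c : ℝ) (t : Fin n) : t ∈ Bset v c ↔ v t = c := by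
  simp [Bset]

lemma exists_eps (v : Fin n → ℝ) (c : ℝ) :
    ∃ ε₀ : ℝ, 0 < ε₀ ∧ ∀ j, v j ≠ c → ε₀ ≤ |v j - c| := by
  classical
  by_cases hne : (Finset.univ.filter (fun j => v j ≠ c)).Nonempty
  · obtain ⟨j₀, hj₀, hmin⟩ := Finset.exists_min_image _ (fun j => |v j - c|) hne
    rw [Finset.mem_filter] at hj₀
    refine ⟨|v j₀ - c|, abs_pos.2 (sub_ne_zero.2 hj₀.2), fun j hj => ?_⟩
    exact hmin j (Finset.mem_filter.2 ⟨Finset.mem_univ j, hj⟩)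
  · exact ⟨1, one_pos, fun j hj =>
      absurd (Finset.mem_filter.2 ⟨Finset.mem_univ j, hj⟩) (fun h => hne ⟨j, h⟩)⟩

lemma block_mem_plus (z v : Fin n → ℝ) (hv : v ∈ Kset z) (c : ℝ)
    (ε₀ : ℝ) (hgap : ∀ j, v j ≠ c → ε₀ ≤ |v j - c|)
    (ε : ℝ) (hε : 0 < ε) (hεle : ε ≤ ε₀) :
    (fun t => v t + 1 * ε * (if t ∈ Bset v c then 1 else 0)) ∈ Kset z := by
  intro i j hz
  have hvij := hv i j hz
  show v i + 1 * ε * (if i ∈ Bset v c then 1 else 0)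
      ≤ v j + 1 * ε * (if j ∈ Bset v c then 1 else 0)
  by_cases hi : i ∈ Bset v c <;> by_cases hj : j ∈ Bset v c
  · rw [if_pos hi, if_pos hj]
    have h1 := (Bset_mem v c i).1 hi
    have h2 := (Bset_mem v c j).1 hj
    rw [h1, h2]
  · rw [if_pos hi, if_neg hj]
    have h1 := (Bset_mem v c i).1 hi
    have hj' : v j ≠ c := fun h => hj ((Bset_mem v c j).2 h)
    have h2 := hgap j hj'
    have h3 : |v j - c| = v j - c := abs_of_nonneg (by linarith [hvij])
    linarith
  · rw [if_neg hi, if_pos hj]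
    have h2 := (Bset_mem v c j).1 hj
    linarith
  · rw [if_neg hi, if_neg hj]; linarith

lemma block_mem_minus (z v : Fin n → ℝ) (hv : v ∈ Kset z) (c : ℝ)
    (ε₀ : ℝ) (hgap : ∀ j, v j ≠ c → ε₀ ≤ |v j - c|)
    (P : Finset (Fin n)) (hP : P ⊆ Bset v c)
    (hdc : ∀ i ∈ Bset v c, ∀ jj ∈ P, z i ≤ z jj → i ∈ P)
    (ε : ℝ) (hε : 0 < ε) (hεle : ε ≤ ε₀) :
    (fun t => v t + (-1) * ε * (if t ∈ P then 1 else 0)) ∈ Kset z := by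
  intro i j hz
  have hvij := hv i j hz
  show v i + (-1) * ε * (if i ∈ P then 1 else 0)
      ≤ v j + (-1) * ε * (if j ∈ P then 1 else 0)
  by_cases hi : i ∈ P <;> by_cases hj : j ∈ P
  · rw [if_pos hi, if_pos hj]; linarith
  · rw [if_pos hi, if_neg hj]
    have h1 : v i = c := (Bset_mem v c i).1 (hP hi)
    linarith
  · rw [if_neg hi, if_pos hj]
    have hiB : i ∉ Bset v c := fun hc => hi (hdc i hc j hj hz)
    have hi' : v i ≠ c := fun h => hiB ((Bset_mem v c i).2 h)
    have h1 := hgap i hi'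
    have h2 : v j = c := (Bset_mem v c j).1 (hP hj)
    have h3 : v i ≤ c := by rw [← h2]; linarith
    have h4 : |v i - c| = -(v i - c) := abs_of_nonpos (by linarith)
    linarith
  · rw [if_neg hi, if_neg hj]; linarith

end B

section KK
variable {n : ℕ}

def kap (u z : Fin n → ℝ) : Fin n → ℝ ×ₗ (ℝ ×ₗ Fin n) :=
  fun i => toLex (z i, toLex (-u i, i))

lemma kap_inj (u z : Fin n → ℝ) : Function.Injective (kap u z) := by
  intro s t h
  have h1 := congrArg (fun p => (ofLex ((ofLex p).2)).2) h
  simpa [kap] using h1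

lemma kap_le_z (u z : Fin n → ℝ) {s t : Fin n} (h : kap u z s ≤ kap u z t) :
    z s ≤ z t := by
  rcases Prod.Lex.le_iff.1 h with h1 | ⟨h1, _⟩
  · exact le_of_lt h1
  · exact le_of_eq h1

lemma kap_lt_z (u z : Fin n → ℝ) {s t : Fin n} (h : kap u z s < kap u z t) :
    z s ≤ z t := kap_le_z u z (le_of_lt h)

lemma z_lt_kap (u z : Fin n → ℝ) {s t : Fin n} (h : z s < z t) :
    kap u z s < kap u z t := Prod.Lex.lt_iff.2 (Or.inl h)

lemma kap_tie (u z : Fin n → ℝ) {s t : Fin n} (hz : z s = z t)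
    (h : kap u z s ≤ kap u z t) : u t ≤ u s := by
  rcases Prod.Lex.le_iff.1 h with h1 | ⟨_, h2⟩
  · exact absurd h1 (by show ¬ z s < z t; rw [hz]; exact lt_irrefl _)
  · rcases Prod.Lex.le_iff.1 h2 with h3 | ⟨h3, _⟩
    · have : -u s < -u t := h3
      linarith
    · have : -u s = -u t := h3
      linarith

end KK

section PK
variable {n : ℕ}

lemma top_slice (T' T : Finset (Fin n)) (ρ : Fin n → ℝ) (hsub : T' ⊆ T)
    (hsep : ∀ i ∈ T', ∀ j ∈ T \ T', ρ j ≤ ρ i) :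
    min 0 (∑ j ∈ T, ρ j) ≤ ∑ i ∈ T', ρ i := by
  by_cases hall : ∀ i ∈ T', 0 ≤ ρ i
  · exact le_trans (min_le_left _ _) (Finset.sum_nonneg hall)
  · push_neg at hall
    obtain ⟨i₀, hi₀, hneg⟩ := hall
    have h1 : ∀ j ∈ T \ T', ρ j ≤ 0 := fun j hj =>
      le_of_lt (lt_of_le_of_lt (hsep i₀ hi₀ j hj) hneg)
    have h2 : ∑ j ∈ T \ T', ρ j ≤ 0 := Finset.sum_nonpos h1
    have h3 : ∑ j ∈ T \ T', ρ j + ∑ j ∈ T', ρ j = ∑ j ∈ T, ρ j := Finset.sum_sdiff hsub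
    calc min 0 (∑ j ∈ T, ρ j) ≤ ∑ j ∈ T, ρ j := min_le_right _ _
      _ ≤ ∑ i ∈ T', ρ i := by linarith

lemma block_prefix_kappa (u z v : Fin n → ℝ) (c : ℝ)
    (hpre : ∀ P : Finset (Fin n), P ⊆ Bset v c →
      (∀ i ∈ Bset v c, ∀ jj ∈ P, z i ≤ z jj → i ∈ P) → 0 ≤ ∑ t ∈ P, (u t - v t)) :
    ∀ i₀ ∈ Bset v c,
      0 ≤ ∑ t ∈ (Bset v c).filter (fun t => kap u z t ≤ kap u z i₀), (u t - v t) := by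
  intro i₀ hi₀
  classical
  set B := Bset v c with hB
  set r : Fin n → ℝ := fun t => u t - v t with hr
  set A := B.filter (fun t => z t < z i₀) with hA
  set T := B.filter (fun t => z t = z i₀) with hT
  set T' := T.filter (fun t => kap u z t ≤ kap u z i₀) with hT'
  have hsplit : B.filter (fun t => kap u z t ≤ kap u z i₀) = A ∪ T' := by
    ext t
    simp only [hA, hT', hT, Finset.mem_filter, Finset.mem_union]
    constructor
    · rintro ⟨htB, hle⟩
      rcases lt_or_eq_of_le (kap_le_z u z hle) with h | h
      · exact Or.inl ⟨htB, h⟩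
      · exact Or.inr ⟨⟨htB, h⟩, hle⟩
    · rintro (⟨htB, hlt⟩ | ⟨⟨htB, _⟩, hle⟩)
      · exact ⟨htB, le_of_lt (z_lt_kap u z hlt)⟩
      · exact ⟨htB, hle⟩
  have hdisj : Disjoint A T' := by
    rw [Finset.disjoint_left]
    intro t htA htT'
    rw [hA, Finset.mem_filter] at htA
    rw [hT', Finset.mem_filter, hT, Finset.mem_filter] at htT'
    exact absurd htT'.1.2 (ne_of_lt htA.2)
  rw [hsplit, Finset.sum_union hdisj]
  have hAsub : A ⊆ B := Finset.filter_subset _ _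
  have hAnn : 0 ≤ ∑ t ∈ A, r t := by
    refine hpre A hAsub ?_
    intro i hi jj hjj hzle
    rw [hA, Finset.mem_filter] at hjj ⊢
    exact ⟨hi, lt_of_le_of_lt hzle hjj.2⟩
  have hcut : 0 ≤ ∑ t ∈ B.filter (fun t => z t ≤ z i₀), r t := by
    refine hpre _ (Finset.filter_subset _ _) ?_
    intro i hi jj hjj hzle
    rw [Finset.mem_filter] at hjj ⊢
    exact ⟨hi, le_trans hzle hjj.2⟩
  have hATcut : A ∪ T = B.filter (fun t => z t ≤ z i₀) := by
    ext t
    simp only [hA, hT, Finset.mem_filter, Finset.mem_union]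
    constructor
    · rintro (⟨htB, h⟩ | ⟨htB, h⟩)
      · exact ⟨htB, le_of_lt h⟩
      · exact ⟨htB, le_of_eq h⟩
    · rintro ⟨htB, hle⟩
      rcases lt_or_eq_of_le hle with h | h
      · exact Or.inl ⟨htB, h⟩
      · exact Or.inr ⟨htB, h⟩
  have hdisj2 : Disjoint A T := by
    rw [Finset.disjoint_left]
    intro t htA htT
    rw [hA, Finset.mem_filter] at htA
    rw [hT, Finset.mem_filter] at htT
    exact absurd htT.2 (ne_of_lt htA.2)
  have hATsum : ∑ t ∈ A, r t + ∑ t ∈ T, r t = ∑ t ∈ B.filter (fun t => z t ≤ z i₀), r t := by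
    rw [← Finset.sum_union hdisj2, hATcut]
  have hslice := top_slice T' T r (Finset.filter_subset _ _) ?_
  · rcases le_or_gt 0 (∑ j ∈ T, r j) with h | h
    · rw [min_eq_left h] at hslice
      linarith
    · rw [min_eq_right (le_of_lt h)] at hslice
      linarith
  · intro i hi j hj
    rw [hT', Finset.mem_filter] at hi
    obtain ⟨hiT, hile⟩ := hi
    rw [Finset.mem_sdiff] at hj
    obtain ⟨hjT, hjn⟩ := hj
    have hjnle : ¬ kap u z j ≤ kap u z i₀ := fun hc =>
      hjn (by rw [hT']; exact Finset.mem_filter.2 ⟨hjT, hc⟩)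
    have hij : kap u z i ≤ kap u z j := le_trans hile (le_of_lt (not_le.1 hjnle))
    rw [hT, Finset.mem_filter] at hiT hjT
    obtain ⟨hiB, hzi⟩ := hiT
    obtain ⟨hjB, hzj⟩ := hjT
    have huji : u j ≤ u i := kap_tie u z (by rw [hzi, hzj]) hij
    have hvi : v i = c := (Bset_mem v c i).1 hiB
    have hvj : v j = c := (Bset_mem v c j).1 hjB
    show u j - v j ≤ u i - v i
    rw [hvi, hvj]
    linarith

lemma exists_g (hn : 1 ≤ n) (z : Fin n → ℝ) (v : Fin n → ℝ) (hv : v ∈ Kset z) :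
    ∃ g : ℝ → ℝ, Monotone g ∧ ∀ i, g (z i) = v i := by
  have hne : (Finset.univ : Finset (Fin n)).Nonempty := ⟨⟨0, hn⟩, Finset.mem_univ _⟩
  set m₀ := Finset.univ.inf' hne v with hm₀
  refine ⟨fun x => Finset.univ.sup' hne (fun i => if z i ≤ x then v i else m₀), ?_, ?_⟩
  · intro x y hxy
    apply Finset.sup'_le
    intro t _
    refine le_trans ?_ (Finset.le_sup' (f := fun i => if z i ≤ y then v i else m₀)
      (Finset.mem_univ t))
    by_cases h : z t ≤ x
    · rw [if_pos h, if_pos (le_trans h hxy)]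
    · rw [if_neg h]
      by_cases h2 : z t ≤ y
      · rw [if_pos h2]; exact Finset.inf'_le v (Finset.mem_univ t)
      · rw [if_neg h2]
  · intro i
    apply le_antisymm
    · apply Finset.sup'_le
      intro t _
      by_cases h : z t ≤ z i
      · rw [if_pos h]; exact hv t i h
      · rw [if_neg h]; exact Finset.inf'_le v (Finset.mem_univ i)
    · refine le_trans ?_ (Finset.le_sup' (f := fun t => if z t ≤ z i then v t else m₀)
        (Finset.mem_univ i))
      rw [if_pos (le_refl (z i))]


end PK



section Matching

variable {n : ℕ} {α : Type*} [LinearOrder α]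

lemma aux_sum_sq_le (B : Finset (Fin n)) (r : Fin n → ℝ) (h : ∀ t ∈ B, 0 ≤ r t) :
    ∑ t ∈ B, r t ^ 2 - (∑ t ∈ B, r t) ^ 2 ≤ 0 := by
  have h1 : ∀ t ∈ B, r t ^ 2 ≤ r t * ∑ s ∈ B, r s := by
    intro t ht
    have h2 : r t ≤ ∑ s ∈ B, r s := Finset.single_le_sum h ht
    calc r t ^ 2 = r t * r t := sq (r t)
      _ ≤ r t * ∑ s ∈ B, r s := mul_le_mul_of_nonneg_left h2 (h t ht)
  have h3 : ∑ t ∈ B, r t ^ 2 ≤ ∑ t ∈ B, (r t * ∑ s ∈ B, r s) := Finset.sum_le_sum h1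
  rw [← Finset.sum_mul] at h3
  nlinarith [h3]

lemma gain_keep1 (a b x : ℝ) (hb : 0 < b) (h2 : b ≤ 2*(-x)) :
    (a - b - x)^2 + 2*a*b ≤ (a - x)^2 := by nlinarith [mul_nonneg hb.le (by linarith : (0:ℝ) ≤ -2*x - b)]

lemma gain_repl1 (a b x : ℝ) (ha : 0 < a) (hb : 0 < b) (hx : x < 0) (h2 : 2*(-x) < b)
    (hba : b < a) : (a - b - x)^2 + 2*a*b ≤ (a + b)^2 := by
  nlinarith [mul_pos (sub_pos.2 hba) (show 0 < b + 2*x by linarith),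
    mul_pos (show 0 < b + 2*x by linarith) (show 0 < b - 2*x by linarith)]

lemma gain_keep2 (a b k : ℝ) (ha : 0 < a) (h2 : a ≤ 2*k) :
    (k + b - a)^2 + 2*a*b ≤ (k + b)^2 := by nlinarith [mul_nonneg ha.le (by linarith : (0:ℝ) ≤ 2*k - a)]

lemma gain_repl2 (a b k : ℝ) (ha : 0 < a) (hb : 0 < b) (hk : 0 < k) (h2 : 2*k < a)
    (hab : a < b) : (k + b - a)^2 + 2*a*b ≤ (a + b)^2 := by
  nlinarith [mul_pos (sub_pos.2 hab) (show 0 < a - 2*k by linarith),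
    mul_pos (show 0 < a - 2*k by linarith) (show 0 < a + 2*k by linarith)]

set_option maxHeartbeats 2000000 in
lemma matching_lemma (κ : Fin n → α) (hκ : Function.Injective κ) :
    ∀ (N : ℕ) (r : Fin n → ℝ) (B : Finset (Fin n)),
      (B.filter (fun t => r t ≠ 0)).card ≤ N →
      (∀ i₀ ∈ B, 0 ≤ ∑ i ∈ B.filter (fun i => κ i ≤ κ i₀), r i) →
      ∃ M : Finset (Fin n × Fin n),
        (∀ p ∈ M, p.1 ∈ B ∧ p.2 ∈ B ∧ κ p.1 < κ p.2 ∧ 0 < r p.1 ∧ r p.2 < 0) ∧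
        (∀ p ∈ M, ∀ q ∈ M, p ≠ q → p.1 ≠ q.1 ∧ p.1 ≠ q.2 ∧ p.2 ≠ q.1 ∧ p.2 ≠ q.2) ∧
        ∑ t ∈ B, r t ^ 2 - (∑ t ∈ B, r t) ^ 2 ≤ ∑ p ∈ M, (r p.1 - r p.2) ^ 2 := by
  intro N
  induction N with
  | zero =>
    intro r B hcard _
    refine ⟨∅, by simp, by simp, ?_⟩
    have hall : ∀ t ∈ B, r t = 0 := by
      intro t ht
      by_contra hne
      have h1 : t ∈ B.filter (fun t => r t ≠ 0) := Finset.mem_filter.2 ⟨ht, hne⟩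
      have := Finset.card_pos.2 ⟨t, h1⟩
      omega
    have h1 : ∑ t ∈ B, r t ^ 2 = 0 := Finset.sum_eq_zero (fun t ht => by rw [hall t ht]; ring)
    have h2 : ∑ t ∈ B, r t = 0 := Finset.sum_eq_zero hall
    simp [h1, h2]
  | succ N ih =>
    intro r B hcard hpre
    have base : (∀ t ∈ B, 0 ≤ r t) →
        ∃ M : Finset (Fin n × Fin n),
          (∀ p ∈ M, p.1 ∈ B ∧ p.2 ∈ B ∧ κ p.1 < κ p.2 ∧ 0 < r p.1 ∧ r p.2 < 0) ∧
          (∀ p ∈ M, ∀ q ∈ M, p ≠ q → p.1 ≠ q.1 ∧ p.1 ≠ q.2 ∧ p.2 ≠ q.1 ∧ p.2 ≠ q.2) ∧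
          ∑ t ∈ B, r t ^ 2 - (∑ t ∈ B, r t) ^ 2 ≤ ∑ p ∈ M, (r p.1 - r p.2) ^ 2 := by
      intro h
      exact ⟨∅, by simp, by simp, by simpa using aux_sum_sq_le B r h⟩
    by_cases hpos : (B.filter (fun t => 0 < r t)).Nonempty
    · obtain ⟨i, hi, hmin⟩ := Finset.exists_min_image _ κ hpos
      rw [Finset.mem_filter] at hi
      obtain ⟨hiB, ha⟩ := hi
      -- F1 : entries strictly before i vanish
      have F1 : ∀ t ∈ B, κ t < κ i → r t = 0 := by
        intro t htB htlt
        set D := B.filter (fun t => κ t < κ i) with hD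
        have hDnonpos : ∀ s ∈ D, r s ≤ 0 := by
          intro s hs
          rw [Finset.mem_filter] at hs
          by_contra hc
          push_neg at hc
          have := hmin s (Finset.mem_filter.2 ⟨hs.1, hc⟩)
          exact absurd hs.2 (not_lt.2 this)
        have hDne : D.Nonempty := ⟨t, Finset.mem_filter.2 ⟨htB, htlt⟩⟩
        obtain ⟨i₀, hi₀, hmax⟩ := Finset.exists_max_image D κ hDne
        rw [Finset.mem_filter] at hi₀
        have hDeq : B.filter (fun s => κ s ≤ κ i₀) = D := by
          ext s
          simp only [hD, Finset.mem_filter]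
          constructor
          · rintro ⟨hsB, hle⟩; exact ⟨hsB, lt_of_le_of_lt hle hi₀.2⟩
          · rintro ⟨hsB, hlt⟩; exact ⟨hsB, hmax s (Finset.mem_filter.2 ⟨hsB, hlt⟩)⟩
        have hsum : 0 ≤ ∑ s ∈ D, r s := by
          have := hpre i₀ hi₀.1
          rwa [hDeq] at this
        have hz : ∑ s ∈ D, r s = 0 := le_antisymm (Finset.sum_nonpos hDnonpos) hsum
        exact (Finset.sum_eq_zero_iff_of_nonpos hDnonpos).mp hz t
          (Finset.mem_filter.2 ⟨htB, htlt⟩)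
      by_cases hneg : (B.filter (fun t => κ i < κ t ∧ r t < 0)).Nonempty

      · -- MAIN CASE
        obtain ⟨j, hj, hjmin⟩ := Finset.exists_min_image _ κ hneg
        rw [Finset.mem_filter] at hj
        obtain ⟨hjB, hij, hbneg⟩ := hj
        set a := r i with ha_def
        set b := -r j with hb_def
        have hb : 0 < b := by rw [hb_def]; linarith
        have hijne : i ≠ j := fun h => absurd (congrArg κ h) (ne_of_lt hij)
        have F3 : ∀ t ∈ B, κ i < κ t → κ t < κ j → 0 ≤ r t := by
          intro t htB h1 h2
          by_contra hc
          push_neg at hc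
          have := hjmin t (Finset.mem_filter.2 ⟨htB, h1, hc⟩)
          exact absurd h2 (not_lt.2 this)
        set m := min a b with hm_def
        have hma : m ≤ a := min_le_left _ _
        have hmb : m ≤ b := min_le_right _ _
        have hm0 : 0 < m := lt_min ha hb
        set r' : Fin n → ℝ := fun t => if t = i then a - m else if t = j then m - b else r t
          with hr'_def
        have hr'i : r' i = a - m := by simp [hr'_def]
        have hr'j : r' j = m - b := by simp [hr'_def, hijne.symm]
        have hr'other : ∀ t, t ≠ i → t ≠ j → r' t = r t := by
          intro t h1 h2; simp [hr'_def, h1, h2]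
        have hrj : r j = -b := by rw [hb_def]; ring
        have hdiff : ∀ t, r' t - r t =
            (if t = i then -m else 0) + (if t = j then m else 0) := by
          intro t
          by_cases h1 : t = i
          · subst h1; rw [hr'i, if_pos rfl, if_neg hijne]; ring
          · by_cases h2 : t = j
            · subst h2; rw [hr'j, if_neg h1, if_pos rfl, hrj]; ring
            · rw [hr'other t h1 h2, if_neg h1, if_neg h2]; ring
        have hsum_diff : ∀ P : Finset (Fin n), ∑ t ∈ P, r' t =
            ∑ t ∈ P, r t + (if i ∈ P then -m else 0) + (if j ∈ P then m else 0) := by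
          intro P
          have e1 : ∑ t ∈ P, (r' t - r t) =
              (if i ∈ P then -m else 0) + (if j ∈ P then m else 0) := by
            rw [Finset.sum_congr rfl (fun t _ => hdiff t), Finset.sum_add_distrib,
              Finset.sum_ite_eq' P i (fun _ => -m), Finset.sum_ite_eq' P j (fun _ => m)]
          rw [Finset.sum_sub_distrib] at e1
          linarith
        have hsum_same : ∑ t ∈ B, r' t = ∑ t ∈ B, r t := by
          rw [hsum_diff B, if_pos hiB, if_pos hjB]; ring
        have hsq_key : (a - m)^2 - a^2 + ((m - b)^2 - b^2) = -(2*a*b) := by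
          rcases le_total a b with h | h
          · rw [hm_def, min_eq_left h]; ring
          · rw [hm_def, min_eq_right h]; ring
        have hsq_diff : ∑ t ∈ B, r' t ^ 2 = ∑ t ∈ B, r t ^ 2 - 2*a*b := by
          have hdiff2 : ∀ t, r' t ^ 2 - r t ^ 2 =
              (if t = i then (a-m)^2 - a^2 else 0) + (if t = j then (m-b)^2 - b^2 else 0) := by
            intro t
            by_cases h1 : t = i
            · subst h1; rw [hr'i, if_pos rfl, if_neg hijne]; ring
            · by_cases h2 : t = j
              · subst h2; rw [hr'j, if_neg h1, if_pos rfl, hrj]; ring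
              · rw [hr'other t h1 h2, if_neg h1, if_neg h2]; ring
          have e1 : ∑ t ∈ B, (r' t ^ 2 - r t ^ 2) =
              ((a-m)^2 - a^2) + ((m-b)^2 - b^2) := by
            rw [Finset.sum_congr rfl (fun t _ => hdiff2 t), Finset.sum_add_distrib,
              Finset.sum_ite_eq' B i (fun _ => (a-m)^2 - a^2),
              Finset.sum_ite_eq' B j (fun _ => (m-b)^2 - b^2), if_pos hiB, if_pos hjB]
          rw [Finset.sum_sub_distrib] at e1
          linarith [hsq_key]
        have hpre' : ∀ i₀ ∈ B, 0 ≤ ∑ t ∈ B.filter (fun t => κ t ≤ κ i₀), r' t := by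
          intro i₀ hi₀
          rw [hsum_diff]
          by_cases hjP : j ∈ B.filter (fun t => κ t ≤ κ i₀)
          · have hiP : i ∈ B.filter (fun t => κ t ≤ κ i₀) := by
              rw [Finset.mem_filter] at hjP ⊢
              exact ⟨hiB, le_of_lt (lt_of_lt_of_le hij hjP.2)⟩
            rw [if_pos hiP, if_pos hjP]
            have := hpre i₀ hi₀; linarith
          · by_cases hiP : i ∈ B.filter (fun t => κ t ≤ κ i₀)
            · rw [if_pos hiP, if_neg hjP]
              have hPa : a ≤ ∑ t ∈ B.filter (fun t => κ t ≤ κ i₀), r t := by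
                have herase : ∀ t ∈ (B.filter (fun t => κ t ≤ κ i₀)).erase i, 0 ≤ r t := by
                  intro t ht
                  obtain ⟨htne, htP⟩ := Finset.mem_erase.1 ht
                  rw [Finset.mem_filter] at htP
                  rcases lt_trichotomy (κ t) (κ i) with h | h | h
                  · exact le_of_eq (F1 t htP.1 h).symm
                  · exact absurd (hκ h) htne
                  · apply F3 t htP.1 h
                    have hnle : ¬ κ j ≤ κ i₀ := fun hc =>
                      hjP (Finset.mem_filter.2 ⟨hjB, hc⟩)
                    exact lt_of_le_of_lt htP.2 (not_le.1 hnle)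
                have e2 := Finset.add_sum_erase _ r hiP
                have h2 : 0 ≤ ∑ t ∈ (B.filter (fun t => κ t ≤ κ i₀)).erase i, r t :=
                  Finset.sum_nonneg herase
                rw [ha_def]; linarith
              linarith
            · rw [if_neg hiP, if_neg hjP]
              have := hpre i₀ hi₀; linarith
        have hcard' : (B.filter (fun t => r' t ≠ 0)).card ≤ N := by
          classical
          set d : Fin n := if a ≤ b then i else j with hd_def
          have hdmem : d ∈ B.filter (fun t => r t ≠ 0) := by
            rw [hd_def]
            split
            · exact Finset.mem_filter.2 ⟨hiB, by rw [← ha_def]; exact ne_of_gt ha⟩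
            · exact Finset.mem_filter.2 ⟨hjB, by rw [hrj]; exact ne_of_lt (by linarith)⟩
          have hsub : B.filter (fun t => r' t ≠ 0) ⊆
              (B.filter (fun t => r t ≠ 0)).erase d := by
            intro t ht
            rw [Finset.mem_filter] at ht
            rw [Finset.mem_erase, Finset.mem_filter]
            refine ⟨?_, ht.1, ?_⟩
            · intro hc
              subst hc
              rw [hd_def] at ht
              by_cases hab : a ≤ b
              · rw [if_pos hab] at ht
                exact ht.2 (by rw [hr'i, hm_def, min_eq_left hab]; ring)
              · rw [if_neg hab] at ht
                exact ht.2 (by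
                  rw [hr'j, hm_def, min_eq_right (le_of_not_ge hab)]; ring)
            · by_cases h1 : t = i
              · subst h1; rw [← ha_def]; exact ne_of_gt ha
              · by_cases h2 : t = j
                · subst h2; rw [hrj]; exact ne_of_lt (by linarith)
                · rw [← hr'other t h1 h2]; exact ht.2
          have h1 := Finset.card_le_card hsub
          rw [Finset.card_erase_of_mem hdmem] at h1
          have h2 : 1 ≤ (B.filter (fun t => r t ≠ 0)).card :=
            Finset.card_pos.2 ⟨d, hdmem⟩
          omega
        obtain ⟨M', hM'mem, hM'dis, hM'sum⟩ := ih r' B hcard' hpre'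
        rw [hsq_diff, hsum_same] at hM'sum
        have hiM'2 : ∀ p ∈ M', p.2 ≠ i := by
          intro p hp hc
          have h1 := (hM'mem p hp).2.2.2.2
          rw [hc, hr'i] at h1; linarith
        have hjM'1 : ∀ p ∈ M', p.1 ≠ j := by
          intro p hp hc
          have h1 := (hM'mem p hp).2.2.2.1
          rw [hc, hr'j] at h1; linarith
        have h2ab : 2*a*b ≤ (a+b)^2 := by nlinarith [sq_nonneg (a-b)]
        have hrij : r i - r j = a + b := by rw [hrj, ← ha_def]; ring
        by_cases hocc : ∃ p ∈ M', p.1 = i ∨ p.2 = j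
        · obtain ⟨p₀, hp₀M, hp₀or⟩ := hocc
          rcases hp₀or with hcase | hcase
          · -- B1 : p₀.1 = i
            have hr'ipos : 0 < a - m := by
              have h1 := (hM'mem p₀ hp₀M).2.2.2.1
              rwa [hcase, hr'i] at h1
            have hba : b < a := by
              rcases lt_or_ge b a with h | h
              · exact h
              · rw [hm_def, min_eq_left h] at hr'ipos; linarith
            have hmb' : m = b := by rw [hm_def, min_eq_right (le_of_lt hba)]
            have hr'j0 : r' j = 0 := by rw [hr'j, hmb']; ring
            have hti : p₀.2 ≠ i := hiM'2 p₀ hp₀M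
            have htj : p₀.2 ≠ j := by
              intro hc
              have h1 := (hM'mem p₀ hp₀M).2.2.2.2
              rw [hc, hr'j0] at h1; exact lt_irrefl 0 h1
            have hrt : r p₀.2 = r' p₀.2 := (hr'other _ hti htj).symm
            have htneg : r p₀.2 < 0 := by rw [hrt]; exact (hM'mem p₀ hp₀M).2.2.2.2
            have huniq : ∀ p ∈ M', p ≠ p₀ → p.1 ≠ i ∧ p.1 ≠ j ∧ p.2 ≠ i ∧ p.2 ≠ j := by
              intro p hp hne
              have hd := hM'dis p hp p₀ hp₀M hne
              refine ⟨by rw [← hcase]; exact hd.1, hjM'1 p hp, hiM'2 p hp, ?_⟩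
              intro hc
              have h1 := (hM'mem p hp).2.2.2.2
              rw [hc, hr'j0] at h1; exact lt_irrefl 0 h1
            have hreq : ∀ p ∈ M', p ≠ p₀ →
                r p.1 = r' p.1 ∧ r p.2 = r' p.2 := by
              intro p hp hne
              obtain ⟨h1, h2, h3, h4⟩ := huniq p hp hne
              exact ⟨(hr'other _ h1 h2).symm, (hr'other _ h3 h4).symm⟩
            have herase_eq : ∑ p ∈ M'.erase p₀, (r p.1 - r p.2)^2 =
                ∑ p ∈ M'.erase p₀, (r' p.1 - r' p.2)^2 := by
              apply Finset.sum_congr rfl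
              intro p hp
              obtain ⟨hne, hpM⟩ := Finset.mem_erase.1 hp
              obtain ⟨e1, e2⟩ := hreq p hpM hne
              rw [e1, e2]
            have hsum'split : (r' p₀.1 - r' p₀.2)^2 + ∑ p ∈ M'.erase p₀, (r' p.1 - r' p.2)^2
                = ∑ p ∈ M', (r' p.1 - r' p.2)^2 :=
              Finset.add_sum_erase _ (fun p => (r' p.1 - r' p.2)^2) hp₀M
            have hp₀r' : r' p₀.1 = a - b := by rw [hcase, hr'i, hmb']
            by_cases hq2 : b ≤ 2 * (-(r p₀.2))
            · refine ⟨M', ?_, hM'dis, ?_⟩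
              · intro p hp
                by_cases hne : p = p₀
                · subst hne
                  obtain ⟨e1, e2, e3, _, _⟩ := hM'mem p hp
                  exact ⟨e1, e2, e3, by rw [hcase, ← ha_def]; exact ha, htneg⟩
                · obtain ⟨e1, e2, e3, e4, e5⟩ := hM'mem p hp
                  obtain ⟨f1, f2⟩ := hreq p hp hne
                  exact ⟨e1, e2, e3, by rw [f1]; exact e4, by rw [f2]; exact e5⟩
              · have hsplit : (r p₀.1 - r p₀.2)^2 + ∑ p ∈ M'.erase p₀, (r p.1 - r p.2)^2
                    = ∑ p ∈ M', (r p.1 - r p.2)^2 :=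
                  Finset.add_sum_erase _ (fun p => (r p.1 - r p.2)^2) hp₀M
                have hgain : (r' p₀.1 - r' p₀.2)^2 + 2*a*b ≤ (r p₀.1 - r p₀.2)^2 := by
                  rw [hp₀r', ← hrt, hcase, ← ha_def]
                  exact gain_keep1 a b (r p₀.2) hb hq2
                linarith [hM'sum, hgain, hsum'split, hsplit, herase_eq]
            · refine ⟨insert (i, j) (M'.erase p₀), ?_, ?_, ?_⟩
              · intro p hp
                rcases Finset.mem_insert.1 hp with h | h
                · subst h
                  exact ⟨hiB, hjB, hij, by rw [← ha_def]; exact ha, hbneg⟩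
                · obtain ⟨hne, hpM⟩ := Finset.mem_erase.1 h
                  obtain ⟨e1, e2, e3, e4, e5⟩ := hM'mem p hpM
                  obtain ⟨f1, f2⟩ := hreq p hpM hne
                  exact ⟨e1, e2, e3, by rw [f1]; exact e4, by rw [f2]; exact e5⟩
              · intro p hp q hq hpq
                rcases Finset.mem_insert.1 hp with h1 | h1 <;>
                  rcases Finset.mem_insert.1 hq with h2 | h2
                · exact absurd (h1.trans h2.symm) hpq
                · obtain ⟨hne, hqM⟩ := Finset.mem_erase.1 h2
                  obtain ⟨g1, g2, g3, g4⟩ := huniq q hqM hne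
                  subst h1
                  exact ⟨Ne.symm g1, Ne.symm g3, Ne.symm g2, Ne.symm g4⟩
                · obtain ⟨hne, hpM⟩ := Finset.mem_erase.1 h1
                  obtain ⟨g1, g2, g3, g4⟩ := huniq p hpM hne
                  subst h2
                  exact ⟨g1, g2, g3, g4⟩
                · exact hM'dis p (Finset.mem_erase.1 h1).2 q (Finset.mem_erase.1 h2).2 hpq
              · have hnotin : (i, j) ∉ M'.erase p₀ := by
                  intro hc
                  obtain ⟨hne, hpM⟩ := Finset.mem_erase.1 hc
                  exact (huniq _ hpM hne).1 rfl
                rw [Finset.sum_insert hnotin]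
                have hgain2 : (r' p₀.1 - r' p₀.2)^2 + 2*a*b ≤ (r i - r j)^2 := by
                  rw [hp₀r', ← hrt, hrij]
                  push_neg at hq2
                  exact gain_repl1 a b (r p₀.2) ha hb htneg hq2 hba
                linarith [hM'sum, hgain2, hsum'split, herase_eq]
          · -- B2 : p₀.2 = j
            have hr'jneg : r' p₀.2 < 0 := (hM'mem p₀ hp₀M).2.2.2.2
            have hmb0 : m - b < 0 := by rw [← hr'j, ← hcase]; exact hr'jneg
            have hab : a < b := by
              rcases lt_or_ge a b with h | h
              · exact h
              · rw [hm_def, min_eq_right h] at hmb0; linarith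
            have hma' : m = a := by rw [hm_def, min_eq_left (le_of_lt hab)]
            have hr'i0 : r' i = 0 := by rw [hr'i, hma']; ring
            have hki : p₀.1 ≠ i := by
              intro hc
              have h1 := (hM'mem p₀ hp₀M).2.2.2.1
              rw [hc, hr'i0] at h1; exact lt_irrefl 0 h1
            have hkj : p₀.1 ≠ j := hjM'1 p₀ hp₀M
            have hrk : r p₀.1 = r' p₀.1 := (hr'other _ hki hkj).symm
            have hkpos : 0 < r p₀.1 := by rw [hrk]; exact (hM'mem p₀ hp₀M).2.2.2.1
            have huniq : ∀ p ∈ M', p ≠ p₀ → p.1 ≠ i ∧ p.1 ≠ j ∧ p.2 ≠ i ∧ p.2 ≠ j := by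
              intro p hp hne
              have hd := hM'dis p hp p₀ hp₀M hne
              refine ⟨?_, hjM'1 p hp, hiM'2 p hp, by rw [← hcase]; exact hd.2.2.2⟩
              intro hc
              have h1 := (hM'mem p hp).2.2.2.1
              rw [hc, hr'i0] at h1; exact lt_irrefl 0 h1
            have hreq : ∀ p ∈ M', p ≠ p₀ →
                r p.1 = r' p.1 ∧ r p.2 = r' p.2 := by
              intro p hp hne
              obtain ⟨h1, h2, h3, h4⟩ := huniq p hp hne
              exact ⟨(hr'other _ h1 h2).symm, (hr'other _ h3 h4).symm⟩
            have herase_eq : ∑ p ∈ M'.erase p₀, (r p.1 - r p.2)^2 =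
                ∑ p ∈ M'.erase p₀, (r' p.1 - r' p.2)^2 := by
              apply Finset.sum_congr rfl
              intro p hp
              obtain ⟨hne, hpM⟩ := Finset.mem_erase.1 hp
              obtain ⟨e1, e2⟩ := hreq p hpM hne
              rw [e1, e2]
            have hsum'split : (r' p₀.1 - r' p₀.2)^2 + ∑ p ∈ M'.erase p₀, (r' p.1 - r' p.2)^2
                = ∑ p ∈ M', (r' p.1 - r' p.2)^2 :=
              Finset.add_sum_erase _ (fun p => (r' p.1 - r' p.2)^2) hp₀M
            have hp₀r' : r' p₀.2 = a - b := by rw [hcase, hr'j, hma']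
            by_cases hk2 : a ≤ 2 * r p₀.1
            · refine ⟨M', ?_, hM'dis, ?_⟩
              · intro p hp
                by_cases hne : p = p₀
                · subst hne
                  obtain ⟨e1, e2, e3, _, _⟩ := hM'mem p hp
                  exact ⟨e1, e2, e3, hkpos, by rw [hcase]; exact hbneg⟩
                · obtain ⟨e1, e2, e3, e4, e5⟩ := hM'mem p hp
                  obtain ⟨f1, f2⟩ := hreq p hp hne
                  exact ⟨e1, e2, e3, by rw [f1]; exact e4, by rw [f2]; exact e5⟩
              · have hsplit : (r p₀.1 - r p₀.2)^2 + ∑ p ∈ M'.erase p₀, (r p.1 - r p.2)^2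
                    = ∑ p ∈ M', (r p.1 - r p.2)^2 :=
                  Finset.add_sum_erase _ (fun p => (r p.1 - r p.2)^2) hp₀M
                have hgain : (r' p₀.1 - r' p₀.2)^2 + 2*a*b ≤ (r p₀.1 - r p₀.2)^2 := by
                  rw [hp₀r', ← hrk, hcase, hrj]
                  have := gain_keep2 a b (r p₀.1) ha hk2
                  linarith
                linarith [hM'sum, hgain, hsum'split, hsplit, herase_eq]
            · refine ⟨insert (i, j) (M'.erase p₀), ?_, ?_, ?_⟩
              · intro p hp
                rcases Finset.mem_insert.1 hp with h | h
                · subst h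
                  exact ⟨hiB, hjB, hij, by rw [← ha_def]; exact ha, hbneg⟩
                · obtain ⟨hne, hpM⟩ := Finset.mem_erase.1 h
                  obtain ⟨e1, e2, e3, e4, e5⟩ := hM'mem p hpM
                  obtain ⟨f1, f2⟩ := hreq p hpM hne
                  exact ⟨e1, e2, e3, by rw [f1]; exact e4, by rw [f2]; exact e5⟩
              · intro p hp q hq hpq
                rcases Finset.mem_insert.1 hp with h1 | h1 <;>
                  rcases Finset.mem_insert.1 hq with h2 | h2
                · exact absurd (h1.trans h2.symm) hpq
                · obtain ⟨hne, hqM⟩ := Finset.mem_erase.1 h2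
                  obtain ⟨g1, g2, g3, g4⟩ := huniq q hqM hne
                  subst h1
                  exact ⟨Ne.symm g1, Ne.symm g3, Ne.symm g2, Ne.symm g4⟩
                · obtain ⟨hne, hpM⟩ := Finset.mem_erase.1 h1
                  obtain ⟨g1, g2, g3, g4⟩ := huniq p hpM hne
                  subst h2
                  exact ⟨g1, g2, g3, g4⟩
                · exact hM'dis p (Finset.mem_erase.1 h1).2 q (Finset.mem_erase.1 h2).2 hpq
              · have hnotin : (i, j) ∉ M'.erase p₀ := by
                  intro hc
                  obtain ⟨hne, hpM⟩ := Finset.mem_erase.1 hc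
                  exact (huniq _ hpM hne).1 rfl
                rw [Finset.sum_insert hnotin]
                have hgain2 : (r' p₀.1 - r' p₀.2)^2 + 2*a*b ≤ (r i - r j)^2 := by
                  rw [hp₀r', ← hrk, hrij]
                  push_neg at hk2
                  have := gain_repl2 a b (r p₀.1) ha hb hkpos hk2 hab
                  linarith
                linarith [hM'sum, hgain2, hsum'split, herase_eq]
        · -- case A: neither i as left nor j as right occurs in M'
          push_neg at hocc
          have havoid : ∀ p ∈ M', p.1 ≠ i ∧ p.1 ≠ j ∧ p.2 ≠ i ∧ p.2 ≠ j := fun p hp =>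
            ⟨(hocc p hp).1, hjM'1 p hp, hiM'2 p hp, (hocc p hp).2⟩
          have hreq : ∀ p ∈ M', r p.1 = r' p.1 ∧ r p.2 = r' p.2 := by
            intro p hp
            obtain ⟨h1, h2, h3, h4⟩ := havoid p hp
            exact ⟨(hr'other _ h1 h2).symm, (hr'other _ h3 h4).symm⟩
          have hnotmem : (i, j) ∉ M' := fun hc => (havoid _ hc).1 rfl
          refine ⟨insert (i, j) M', ?_, ?_, ?_⟩
          · intro p hp
            rcases Finset.mem_insert.1 hp with h | h
            · subst h
              exact ⟨hiB, hjB, hij, by rw [← ha_def]; exact ha, hbneg⟩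
            · obtain ⟨e1, e2, e3, e4, e5⟩ := hM'mem p h
              obtain ⟨f1, f2⟩ := hreq p h
              exact ⟨e1, e2, e3, by rw [f1]; exact e4, by rw [f2]; exact e5⟩
          · intro p hp q hq hpq
            rcases Finset.mem_insert.1 hp with h1 | h1 <;>
              rcases Finset.mem_insert.1 hq with h2 | h2
            · exact absurd (h1.trans h2.symm) hpq
            · obtain ⟨g1, g2, g3, g4⟩ := havoid q h2
              subst h1
              exact ⟨Ne.symm g1, Ne.symm g3, Ne.symm g2, Ne.symm g4⟩
            · obtain ⟨g1, g2, g3, g4⟩ := havoid p h1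
              subst h2
              exact ⟨g1, g2, g3, g4⟩
            · exact hM'dis p h1 q h2 hpq
          · rw [Finset.sum_insert hnotmem]
            have heq : ∑ p ∈ M', (r p.1 - r p.2)^2 = ∑ p ∈ M', (r' p.1 - r' p.2)^2 := by
              apply Finset.sum_congr rfl
              intro p hp
              obtain ⟨e1, e2⟩ := hreq p hp
              rw [e1, e2]
            rw [heq]
            have hr2 : (r i - r j)^2 = (a+b)^2 := by rw [hrij]
            rw [hr2]
            linarith [hM'sum, h2ab]
      · -- no negative after i: all entries nonneg
        apply base
        intro t htB
        rcases lt_trichotomy (κ t) (κ i) with h | h | h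
        · exact le_of_eq (F1 t htB h).symm
        · rw [hκ h]; exact le_of_lt ha
        · by_contra hc
          push_neg at hc
          exact hneg ⟨t, Finset.mem_filter.2 ⟨htB, h, hc⟩⟩
    · -- no positive entries at all: all entries are zero
      apply base
      intro t htB
      have hnonpos : ∀ s ∈ B, r s ≤ 0 := by
        intro s hs
        by_contra hc
        push_neg at hc
        exact hpos ⟨s, Finset.mem_filter.2 ⟨hs, hc⟩⟩
      obtain ⟨i₀, hi₀, hmax⟩ := Finset.exists_max_image B κ ⟨t, htB⟩
      have hBeq : B.filter (fun s => κ s ≤ κ i₀) = B := by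
        apply Finset.filter_true_of_mem
        intro s hs; exact hmax s hs
      have hsum : 0 ≤ ∑ s ∈ B, r s := by
        have := hpre i₀ hi₀
        rwa [hBeq] at this
      have hz : ∑ s ∈ B, r s = 0 := le_antisymm (Finset.sum_nonpos hnonpos) hsum
      exact le_of_eq ((Finset.sum_eq_zero_iff_of_nonpos hnonpos).mp hz t htB).symm

end Matching

set_option maxHeartbeats 2000000 in
/-- key property of oracle matching:
`I(u,z) ≤ S(u,z) ≤ √2 · I(u,z)`. -/
theorem matchingScore_isotonicDist (n : ℕ) (hn : 1 ≤ n) (u z : Fin n → ℝ) :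
    isotonicDist n u z ≤ matchingScore n u z ∧
      matchingScore n u z ≤ Real.sqrt 2 * isotonicDist n u z := by
  classical
  set SS : Set ℝ := {r : ℝ | ∃ (L : ℕ) (i j : Fin L → Fin n),
    Function.Injective (Sum.elim i j) ∧ L ≤ n / 2 ∧
    (∀ ℓ, z (i ℓ) ≤ z (j ℓ)) ∧
    r = Real.sqrt (∑ ℓ, max (u (i ℓ) - u (j ℓ)) 0 ^ 2)} with hSS
  set IS : Set ℝ := {r : ℝ | ∃ g : ℝ → ℝ, Monotone g ∧
    r = Real.sqrt (∑ i, (u i - g (z i)) ^ 2)} with hIS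
  have hSdef : matchingScore n u z = sSup SS := rfl
  have hIdef : isotonicDist n u z = sInf IS := rfl
  have hSnonneg : ∀ s ∈ SS, 0 ≤ s := by
    rintro s ⟨L, i, j, _, _, _, rfl⟩; exact Real.sqrt_nonneg _
  have hInonneg : ∀ t ∈ IS, 0 ≤ t := by
    rintro t ⟨g, _, rfl⟩; exact Real.sqrt_nonneg _
  have h0S : (0:ℝ) ∈ SS := by
    refine ⟨0, Fin.elim0, Fin.elim0, ?_, Nat.zero_le _, fun ℓ => ℓ.elim0, ?_⟩
    · intro x y h; rcases x with x | x <;> exact x.elim0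
    · simp
  have hIne : IS.Nonempty :=
    ⟨Real.sqrt (∑ i, (u i - (fun _ : ℝ => (0:ℝ)) (z i)) ^ 2), fun _ => 0, monotone_const, rfl⟩
  have hkey : ∀ s ∈ SS, ∀ t ∈ IS, s ≤ Real.sqrt 2 * t := by
    rintro s ⟨L, i, j, hinj, hL, hord, rfl⟩ t ⟨g, hg, rfl⟩
    have hsum : (∑ ℓ, max (u (i ℓ) - u (j ℓ)) 0 ^ 2)
        ≤ 2 * ∑ t, (u t - g (z t))^2 := by
      have hpt : ∀ ℓ, max (u (i ℓ) - u (j ℓ)) 0 ^ 2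
          ≤ 2 * ((u (i ℓ) - g (z (i ℓ)))^2 + (u (j ℓ) - g (z (j ℓ)))^2) := by
        intro ℓ
        have hgz : g (z (i ℓ)) ≤ g (z (j ℓ)) := hg (hord ℓ)
        rcases le_or_gt (u (i ℓ) - u (j ℓ)) 0 with h | h
        · rw [max_eq_right h]
          nlinarith [sq_nonneg (u (i ℓ) - g (z (i ℓ))), sq_nonneg (u (j ℓ) - g (z (j ℓ)))]
        · rw [max_eq_left h.le]
          nlinarith [sq_nonneg ((u (i ℓ) - g (z (i ℓ))) + (u (j ℓ) - g (z (j ℓ)))), hgz, h]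
      calc (∑ ℓ, max (u (i ℓ) - u (j ℓ)) 0 ^ 2)
          ≤ ∑ ℓ, 2 * ((u (i ℓ) - g (z (i ℓ)))^2 + (u (j ℓ) - g (z (j ℓ)))^2) :=
            Finset.sum_le_sum fun ℓ _ => hpt ℓ
        _ = 2 * ((∑ ℓ, (u (i ℓ) - g (z (i ℓ)))^2) + (∑ ℓ, (u (j ℓ) - g (z (j ℓ)))^2)) := by
            rw [← Finset.mul_sum, Finset.sum_add_distrib]
        _ = 2 * (∑ x : Fin L ⊕ Fin L,
              (u (Sum.elim i j x) - g (z (Sum.elim i j x)))^2) := by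
            rw [Fintype.sum_sum_type]
            simp only [Sum.elim_inl, Sum.elim_inr]
        _ = 2 * (∑ t ∈ Finset.univ.image (Sum.elim i j), (u t - g (z t))^2) := by
            rw [Finset.sum_image (fun x _ y _ h => hinj h)]
        _ ≤ 2 * ∑ t, (u t - g (z t))^2 := by
            have := Finset.sum_le_sum_of_subset_of_nonneg
              (Finset.subset_univ (Finset.univ.image (Sum.elim i j)))
              (fun t _ _ => sq_nonneg (u t - g (z t)))
            linarith
    have h2 := Real.sqrt_le_sqrt hsum
    rwa [Real.sqrt_mul (by norm_num : (0:ℝ) ≤ 2)] at h2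
  have hSbdd : BddAbove SS := by
    obtain ⟨t₀, ht₀⟩ := hIne
    exact ⟨Real.sqrt 2 * t₀, fun s hs => hkey s hs t₀ ht₀⟩
  have hIbddb : BddBelow IS := ⟨0, fun t ht => hInonneg t ht⟩
  have hSne : SS.Nonempty := ⟨0, h0S⟩
  have hdir2 : sSup SS ≤ Real.sqrt 2 * sInf IS := by
    have hs2 : (0:ℝ) < Real.sqrt 2 := Real.sqrt_pos.2 (by norm_num)
    have h1 : ∀ t ∈ IS, sSup SS / Real.sqrt 2 ≤ t := by
      intro t ht
      rw [div_le_iff₀ hs2, mul_comm]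
      exact csSup_le hSne (fun s hs => hkey s hs t ht)
    have h2 := le_csInf hIne h1
    rw [div_le_iff₀ hs2] at h2
    rw [mul_comm]
    exact h2
  -- hard direction
  obtain ⟨v, hv, hmin⟩ := exists_iso_min u z
  have hblocksum : ∀ c : ℝ, ∑ t ∈ Bset v c, (u t - v t) = 0 := by
    intro c
    obtain ⟨ε₀, hε₀, hgap⟩ := exists_eps v c
    have h1 := perturb_core u z v hmin (Bset v c) ε₀ hε₀ 1 (Or.inl rfl)
      (fun ε hε hεle => block_mem_plus z v hv c ε₀ hgap ε hε hεle)
    have h2 := perturb_core u z v hmin (Bset v c) ε₀ hε₀ (-1) (Or.inr rfl)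
      (fun ε hε hεle => block_mem_minus z v hv c ε₀ hgap (Bset v c) (Finset.Subset.refl _)
        (fun i hi _ _ _ => hi) ε hε hεle)
    linarith
  have hblockpre : ∀ c : ℝ, ∀ P : Finset (Fin n), P ⊆ Bset v c →
      (∀ i ∈ Bset v c, ∀ jj ∈ P, z i ≤ z jj → i ∈ P) → 0 ≤ ∑ t ∈ P, (u t - v t) := by
    intro c P hP hdc
    obtain ⟨ε₀, hε₀, hgap⟩ := exists_eps v c
    have h2 := perturb_core u z v hmin P ε₀ hε₀ (-1) (Or.inr rfl)
      (fun ε hε hεle => block_mem_minus z v hv c ε₀ hgap P hP hdc ε hε hεle)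
    linarith
  have hkpre : ∀ c : ℝ, ∀ i₀ ∈ Bset v c,
      0 ≤ ∑ t ∈ (Bset v c).filter (fun t => kap u z t ≤ kap u z i₀), (u t - v t) :=
    fun c => block_prefix_kappa u z v c (hblockpre c)
  have hmatch : ∀ c : ℝ, ∃ M : Finset (Fin n × Fin n),
      (∀ p ∈ M, p.1 ∈ Bset v c ∧ p.2 ∈ Bset v c ∧ kap u z p.1 < kap u z p.2 ∧
        0 < u p.1 - v p.1 ∧ u p.2 - v p.2 < 0) ∧
      (∀ p ∈ M, ∀ q ∈ M, p ≠ q → p.1 ≠ q.1 ∧ p.1 ≠ q.2 ∧ p.2 ≠ q.1 ∧ p.2 ≠ q.2) ∧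
      ∑ t ∈ Bset v c, (u t - v t) ^ 2 - (∑ t ∈ Bset v c, (u t - v t)) ^ 2
        ≤ ∑ p ∈ M, ((u p.1 - v p.1) - (u p.2 - v p.2)) ^ 2 :=
    fun c => matching_lemma (kap u z) (kap_inj u z)
      ((Bset v c).filter (fun t => (u t - v t) ≠ 0)).card (fun t => u t - v t) (Bset v c)
      le_rfl (hkpre c)
  choose MC hMC1 hMC2 hMC3 using hmatch
  have hMC3' : ∀ c, ∑ t ∈ Bset v c, (u t - v t)^2
      ≤ ∑ p ∈ MC c, ((u p.1 - v p.1) - (u p.2 - v p.2))^2 := by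
    intro c
    have h1 := hMC3 c
    rw [hblocksum c] at h1
    simpa using h1
  set M : Finset (Fin n × Fin n) := (Finset.univ.image v).biUnion MC with hM
  have hMCB : ∀ c, ∀ p ∈ MC c, v p.1 = c ∧ v p.2 = c := by
    intro c p hp
    obtain ⟨h1, h2, _, _, _⟩ := hMC1 c p hp
    exact ⟨(Bset_mem v c p.1).1 h1, (Bset_mem v c p.2).1 h2⟩
  have hMmem : ∀ p ∈ M, v p.1 = v p.2 ∧ kap u z p.1 < kap u z p.2 ∧
      0 < u p.1 - v p.1 ∧ u p.2 - v p.2 < 0 := by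
    intro p hp
    rw [hM, Finset.mem_biUnion] at hp
    obtain ⟨c, _, hpc⟩ := hp
    obtain ⟨hc1, hc2⟩ := hMCB c p hpc
    obtain ⟨_, _, h3, h4, h5⟩ := hMC1 c p hpc
    exact ⟨hc1.trans hc2.symm, h3, h4, h5⟩
  have hMdis : ∀ p ∈ M, ∀ q ∈ M, p ≠ q →
      p.1 ≠ q.1 ∧ p.1 ≠ q.2 ∧ p.2 ≠ q.1 ∧ p.2 ≠ q.2 := by
    intro p hp q hq hpq
    rw [hM, Finset.mem_biUnion] at hp hq
    obtain ⟨c, _, hpc⟩ := hp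
    obtain ⟨c', _, hqc⟩ := hq
    by_cases hcc : c = c'
    · subst hcc; exact hMC2 c p hpc q hqc hpq
    · obtain ⟨hp1, hp2⟩ := hMCB c p hpc
      obtain ⟨hq1, hq2⟩ := hMCB c' q hqc
      refine ⟨?_, ?_, ?_, ?_⟩ <;> intro hcon <;> apply hcc
      · rw [← hp1, ← hq1, hcon]
      · rw [← hp1, ← hq2, hcon]
      · rw [← hp2, ← hq1, hcon]
      · rw [← hp2, ← hq2, hcon]
  have hMsum : ∑ t, (u t - v t)^2 ≤ ∑ p ∈ M, ((u p.1 - v p.1) - (u p.2 - v p.2))^2 := by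
    have hfib : ∑ c ∈ Finset.univ.image v,
        ∑ t ∈ Finset.univ.filter (fun t => v t = c), (u t - v t)^2
        = ∑ t, (u t - v t)^2 :=
      Finset.sum_fiberwise_of_maps_to (fun t _ => Finset.mem_image_of_mem v (Finset.mem_univ t)) _
    have hdisjM : (↑(Finset.univ.image v) : Set ℝ).PairwiseDisjoint MC := by
      intro c _ c' _ hcc
      show Disjoint (MC c) (MC c')
      refine Finset.disjoint_left.2 ?_
      intro p hpc hpc'
      exact hcc (((hMCB c p hpc).1).symm.trans ((hMCB c' p hpc').1))
    calc ∑ t, (u t - v t)^2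
        = ∑ c ∈ Finset.univ.image v,
            ∑ t ∈ Finset.univ.filter (fun t => v t = c), (u t - v t)^2 := hfib.symm
      _ ≤ ∑ c ∈ Finset.univ.image v,
            ∑ p ∈ MC c, ((u p.1 - v p.1) - (u p.2 - v p.2))^2 :=
          Finset.sum_le_sum (fun c _ => hMC3' c)
      _ = ∑ p ∈ M, ((u p.1 - v p.1) - (u p.2 - v p.2))^2 := by
          rw [hM, Finset.sum_biUnion hdisjM]
  have hMmax : ∀ p ∈ M, ((u p.1 - v p.1) - (u p.2 - v p.2))^2 = max (u p.1 - u p.2) 0 ^ 2 := by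
    intro p hp
    obtain ⟨hveq, _, h4, h5⟩ := hMmem p hp
    have h6 : u p.1 - u p.2 = (u p.1 - v p.1) - (u p.2 - v p.2) := by rw [hveq]; ring
    have hpos : 0 ≤ u p.1 - u p.2 := by rw [h6]; linarith
    rw [max_eq_left hpos, h6]
  set L := M.card with hLdef
  set e := M.equivFin.symm with he
  set iF : Fin L → Fin n := fun ℓ => ((e ℓ) : Fin n × Fin n).1 with hiF
  set jF : Fin L → Fin n := fun ℓ => ((e ℓ) : Fin n × Fin n).2 with hjF
  have hememb : ∀ ℓ, ((e ℓ) : Fin n × Fin n) ∈ M := fun ℓ => (e ℓ).2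
  have hord : ∀ ℓ, z (iF ℓ) ≤ z (jF ℓ) := fun ℓ =>
    kap_lt_z u z (hMmem _ (hememb ℓ)).2.1
  have hne12 : ∀ p ∈ M, p.1 ≠ p.2 := fun p hp h =>
    absurd (congrArg (kap u z) h) (ne_of_lt (hMmem p hp).2.1)
  have hpairne : ∀ x y : Fin L, x ≠ y →
      ((e x) : Fin n × Fin n) ≠ ((e y) : Fin n × Fin n) := by
    intro x y hne h
    exact hne (e.injective (Subtype.ext h))
  have hinj : Function.Injective (Sum.elim iF jF) := by
    intro x y hxy
    rcases x with x | x <;> rcases y with y | y <;>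
      simp only [Sum.elim_inl, Sum.elim_inr, hiF, hjF] at hxy
    · have hxy' : x = y := by
        by_contra hne
        exact (hMdis _ (hememb x) _ (hememb y) (hpairne x y hne)).1 hxy
      rw [hxy']
    · exfalso
      by_cases hpq : ((e x) : Fin n × Fin n) = ((e y) : Fin n × Fin n)
      · rw [hpq] at hxy
        exact hne12 _ (hememb y) hxy
      · exact (hMdis _ (hememb x) _ (hememb y) hpq).2.1 hxy
    · exfalso
      by_cases hpq : ((e x) : Fin n × Fin n) = ((e y) : Fin n × Fin n)
      · rw [hpq] at hxy
        exact hne12 _ (hememb y) hxy.symm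
      · exact (hMdis _ (hememb x) _ (hememb y) hpq).2.2.1 hxy
    · have hxy' : x = y := by
        by_contra hne
        exact (hMdis _ (hememb x) _ (hememb y) (hpairne x y hne)).2.2.2 hxy
      rw [hxy']
  have hL2 : L ≤ n / 2 := by
    have hcard := Fintype.card_le_of_injective _ hinj
    simp only [Fintype.card_sum, Fintype.card_fin] at hcard
    rw [Nat.le_div_iff_mul_le (by norm_num : 0 < 2)]
    omega
  have hsum_eq : ∑ ℓ, max (u (iF ℓ) - u (jF ℓ)) 0 ^ 2
      = ∑ p ∈ M, max (u p.1 - u p.2) 0 ^ 2 := by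
    rw [← Finset.sum_coe_sort M (fun p => max (u p.1 - u p.2) 0 ^ 2)]
    exact Equiv.sum_comp e (fun p : {x // x ∈ M} =>
      max (u (p : Fin n × Fin n).1 - u (p : Fin n × Fin n).2) 0 ^ 2)
  have hsM : Real.sqrt (∑ ℓ, max (u (iF ℓ) - u (jF ℓ)) 0 ^ 2) ∈ SS :=
    ⟨L, iF, jF, hinj, hL2, hord, rfl⟩
  obtain ⟨g, hg, hgz⟩ := exists_g hn z v hv
  have htv : Real.sqrt (∑ i, (u i - g (z i)) ^ 2) ∈ IS := ⟨g, hg, rfl⟩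
  have htv_eq : Real.sqrt (∑ i, (u i - g (z i)) ^ 2)
      = Real.sqrt (∑ i, (u i - v i) ^ 2) := by
    congr 1
    exact Finset.sum_congr rfl fun i _ => by rw [hgz i]
  have hchain : Real.sqrt (∑ i, (u i - v i) ^ 2)
      ≤ Real.sqrt (∑ ℓ, max (u (iF ℓ) - u (jF ℓ)) 0 ^ 2) := by
    apply Real.sqrt_le_sqrt
    rw [hsum_eq]
    calc ∑ i, (u i - v i)^2
        ≤ ∑ p ∈ M, ((u p.1 - v p.1) - (u p.2 - v p.2))^2 := hMsum
      _ = ∑ p ∈ M, max (u p.1 - u p.2) 0 ^ 2 :=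
          Finset.sum_congr rfl (fun p hp => hMmax p hp)
  have hdir1 : sInf IS ≤ sSup SS := by
    calc sInf IS ≤ Real.sqrt (∑ i, (u i - g (z i)) ^ 2) := csInf_le hIbddb htv
      _ = Real.sqrt (∑ i, (u i - v i) ^ 2) := htv_eq
      _ ≤ Real.sqrt (∑ ℓ, max (u (iF ℓ) - u (jF ℓ)) 0 ^ 2) := hchain
      _ ≤ sSup SS := le_csSup hSbdd hsM
  rw [hSdef, hIdef]
  exact ⟨hdir1, hdir2⟩

end
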